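/- Let R, k be positive integers, M ∈ ℂ^{k×k} a Hermitian positive semidefinite matrix, and Ψ ∈ ℂ^{R×k}. Then for every index j, the j-th largest eigenvalue of the Hermitian positive semidefinite matrix Ψ·M·Ψᴴ is at least λ_min(M) times the j-th largest eigenvalue of Ψ·Ψᴴ, where λ_min(M) is the smallest eigenvalue of M. -/

import Mathlib

open Matrix
open scoped ComplexOrder
open scoped InnerProductSpace

/-- The `j`-th largest value of the tuple `f` (with `j = 0` giving the largest). -/
noncomputable def nthLargest {n : ℕ} (f : Fin n → ℝ) (j : Fin n) : ℝ :=
  (f ∘ Tuple.sort f) j.rev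

variable {n : ℕ}


lemma dot_sum (v : Fin n → ℂ) (f : Fin n → Fin n → ℂ) :
    v ⬝ᵥ (∑ i, f i) = ∑ i, v ⬝ᵥ f i := by
  simp only [dotProduct, Finset.sum_apply, Finset.mul_sum]
  exact Finset.sum_comm

lemma dot_eq_sum_eig (T : Matrix (Fin n) (Fin n) ℂ) (hT : T.IsHermitian)
    (x : EuclideanSpace ℂ (Fin n)) :
    RCLike.re (star (x : Fin n → ℂ) ⬝ᵥ (T *ᵥ x)) =
      ∑ i, hT.eigenvalues i * ‖hT.eigenvectorBasis.repr x i‖^2 := by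
  set u := hT.eigenvectorBasis with hu
  have hx : (x : Fin n → ℂ) = ∑ i, u.repr x i • (u i : Fin n → ℂ) := by
    simpa using congrArg WithLp.ofLp (u.sum_repr x).symm
  have hTx : T *ᵥ (x : Fin n → ℂ) = ∑ i, u.repr x i • (hT.eigenvalues i • (u i : Fin n → ℂ)) := by
    conv_lhs => rw [hx]
    simp only [← Matrix.mulVecLin_apply, _root_.map_sum, LinearMap.map_smul]
    simp only [Matrix.mulVecLin_apply, hu]
    exact Finset.sum_congr rfl fun i _ => congrArg _ (hT.mulVec_eigenvectorBasis i)
  have key : star (x : Fin n → ℂ) ⬝ᵥ (T *ᵥ x)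
      = ∑ i, (hT.eigenvalues i : ℂ) * (‖u.repr x i‖:ℂ)^2 := by
    rw [hTx, dot_sum]
    congr 1; ext i
    rw [dotProduct_smul]
    have h2 : star (x : Fin n → ℂ) ⬝ᵥ (hT.eigenvalues i • (u i : Fin n → ℂ))
        = (hT.eigenvalues i : ℂ) * (star (x : Fin n → ℂ) ⬝ᵥ (u i : Fin n → ℂ)) := by
      have : hT.eigenvalues i • (u i : Fin n → ℂ) = (hT.eigenvalues i : ℂ) • (u i : Fin n → ℂ) := by
        ext j; simp [Complex.real_smul]
      rw [this, dotProduct_smul, smul_eq_mul]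
    rw [h2]
    have h1 : star (x : Fin n → ℂ) ⬝ᵥ (u i : Fin n → ℂ) = (starRingEnd ℂ) (u.repr x i) := by
      rw [u.repr_apply_apply]
      rw [show star (x : Fin n → ℂ) ⬝ᵥ (u i : Fin n → ℂ) = ⟪x, u i⟫_ℂ by rw [dotProduct_comm]; rfl]
      rw [← inner_conj_symm]
    rw [h1, smul_eq_mul]
    rw [show u.repr x i * ((hT.eigenvalues i : ℂ) * (starRingEnd ℂ) (u.repr x i))
      = (hT.eigenvalues i : ℂ) * (u.repr x i * (starRingEnd ℂ) (u.repr x i)) from by ring]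
    rw [Complex.mul_conj']
  rw [key]
  simp [RCLike.re_to_complex, Complex.re_sum, ← Complex.ofReal_pow, ← Complex.ofReal_mul]

lemma repr_zero_of_mem_span (b : OrthonormalBasis (Fin n) ℂ (EuclideanSpace ℂ (Fin n)))
    (s : Finset (Fin n)) (x : EuclideanSpace ℂ (Fin n))
    (hx : x ∈ Submodule.span ℂ (b '' ↑s)) {i : Fin n} (hi : i ∉ s) :
    b.repr x i = 0 := by
  induction hx using Submodule.span_induction with
  | mem y hy =>
    obtain ⟨j, hj, rfl⟩ := hy
    rw [b.repr_self]
    simp only [EuclideanSpace.single_apply]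
    rw [if_neg]
    rintro rfl; exact hi hj
  | zero => simp
  | add y z _ _ hy hz => simp [map_add, hy, hz]
  | smul a y _ hy => simp [_root_.map_smul, hy]

lemma norm_sq_eq_sum_repr (b : OrthonormalBasis (Fin n) ℂ (EuclideanSpace ℂ (Fin n)))
    (x : EuclideanSpace ℂ (Fin n)) : ‖x‖^2 = ∑ i, ‖b.repr x i‖^2 := by
  have h1 : ‖x‖ = ‖b.repr x‖ := (b.repr.norm_map x).symm
  rw [h1, EuclideanSpace.norm_eq, Real.sq_sqrt]
  positivity

lemma rayleigh_ge (T : Matrix (Fin n) (Fin n) ℂ) (hT : T.IsHermitian)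
    (s : Finset (Fin n)) (c : ℝ) (hc : ∀ i ∈ s, c ≤ hT.eigenvalues i)
    (x : EuclideanSpace ℂ (Fin n))
    (hx : x ∈ Submodule.span ℂ (hT.eigenvectorBasis '' ↑s)) :
    c * ‖x‖^2 ≤ RCLike.re (star (x : Fin n → ℂ) ⬝ᵥ (T *ᵥ x)) := by
  rw [dot_eq_sum_eig, norm_sq_eq_sum_repr hT.eigenvectorBasis, Finset.mul_sum]
  apply Finset.sum_le_sum
  intro i _
  by_cases hi : i ∈ s
  · exact mul_le_mul_of_nonneg_right (hc i hi) (by positivity)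
  · rw [repr_zero_of_mem_span _ s x hx hi]; simp

lemma rayleigh_le (T : Matrix (Fin n) (Fin n) ℂ) (hT : T.IsHermitian)
    (s : Finset (Fin n)) (c : ℝ) (hc : ∀ i ∈ s, hT.eigenvalues i ≤ c)
    (x : EuclideanSpace ℂ (Fin n))
    (hx : x ∈ Submodule.span ℂ (hT.eigenvectorBasis '' ↑s)) :
    RCLike.re (star (x : Fin n → ℂ) ⬝ᵥ (T *ᵥ x)) ≤ c * ‖x‖^2 := by
  rw [dot_eq_sum_eig, norm_sq_eq_sum_repr hT.eigenvectorBasis, Finset.mul_sum]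
  apply Finset.sum_le_sum
  intro i _
  by_cases hi : i ∈ s
  · exact mul_le_mul_of_nonneg_right (hc i hi) (by positivity)
  · rw [repr_zero_of_mem_span _ s x hx hi]; simp

lemma finrank_span_basis_image (b : OrthonormalBasis (Fin n) ℂ (EuclideanSpace ℂ (Fin n)))
    (s : Finset (Fin n)) :
    Module.finrank ℂ (Submodule.span ℂ (b '' ↑s)) = s.card := by
  have hli : LinearIndependent ℂ (fun i : {i // i ∈ s} => b i) :=
    b.orthonormal.linearIndependent.comp _ Subtype.val_injective
  have himg : Set.range (fun i : {i // i ∈ s} => b i) = b '' ↑s := by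
    ext y; simp
  rw [← himg, finrank_span_eq_card hli, Fintype.card_coe]


lemma nthLargest_mono_aux (A B : Matrix (Fin n) (Fin n) ℂ)
    (hA : A.IsHermitian) (hB : B.IsHermitian) (c : ℝ) (hc : 0 ≤ c)
    (h : ∀ x : Fin n → ℂ, c * RCLike.re (star x ⬝ᵥ (A *ᵥ x)) ≤ RCLike.re (star x ⬝ᵥ (B *ᵥ x)))
    (j : Fin n) :
    c * nthLargest hA.eigenvalues j ≤ nthLargest hB.eigenvalues j := by
  set m := j.rev with hm
  set σ := Tuple.sort hA.eigenvalues with hσ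
  set τ := Tuple.sort hB.eigenvalues with hτ
  set sA : Finset (Fin n) := (Finset.Ici m).image σ with hsA
  set sB : Finset (Fin n) := (Finset.Iic m).image τ with hsB
  set uA := hA.eigenvectorBasis
  set uB := hB.eigenvectorBasis
  set S := Submodule.span ℂ (uA '' ↑sA) with hS
  set T := Submodule.span ℂ (uB '' ↑sB) with hT
  -- dimensions
  have hdS : Module.finrank ℂ S = n - (m : ℕ) := by
    rw [hS, finrank_span_basis_image, hsA, Finset.card_image_of_injective _ σ.injective,
      Fin.card_Ici]
  have hdT : Module.finrank ℂ T = (m : ℕ) + 1 := by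
    rw [hT, finrank_span_basis_image, hsB, Finset.card_image_of_injective _ τ.injective,
      Fin.card_Iic]
  -- nontrivial intersection
  have hdim : 0 < Module.finrank ℂ ↥(S ⊓ T) := by
    have h1 := Submodule.finrank_sup_add_finrank_inf_eq S T
    have h2 : Module.finrank ℂ ↥(S ⊔ T) ≤ n := by
      simpa [finrank_euclideanSpace] using Submodule.finrank_le (S ⊔ T)
    have h3 : (m : ℕ) < n := m.isLt
    omega
  obtain ⟨⟨x, hxST⟩, hxne⟩ := Module.finrank_pos_iff_exists_ne_zero.mp hdim
  have hx0 : x ≠ 0 := by simpa [Submodule.mk_eq_zero] using hxne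
  have hxS : x ∈ S := hxST.1
  have hxT : x ∈ T := hxST.2
  -- Rayleigh bounds
  have hge : hA.eigenvalues (σ m) * ‖x‖^2 ≤ RCLike.re (star (x : Fin n → ℂ) ⬝ᵥ (A *ᵥ x)) := by
    apply rayleigh_ge A hA sA _ _ x hxS
    intro i hi
    rw [hsA] at hi
    obtain ⟨i', hi', rfl⟩ := Finset.mem_image.mp hi
    exact Tuple.monotone_sort hA.eigenvalues (Finset.mem_Ici.mp hi')
  have hle : RCLike.re (star (x : Fin n → ℂ) ⬝ᵥ (B *ᵥ x)) ≤ hB.eigenvalues (τ m) * ‖x‖^2 := by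
    apply rayleigh_le B hB sB _ _ x hxT
    intro i hi
    rw [hsB] at hi
    obtain ⟨i', hi', rfl⟩ := Finset.mem_image.mp hi
    exact Tuple.monotone_sort hB.eigenvalues (Finset.mem_Iic.mp hi')
  have hxpos : (0:ℝ) < ‖x‖^2 := by have := norm_pos_iff.mpr hx0; positivity
  have chain : c * hA.eigenvalues (σ m) * ‖x‖^2 ≤ hB.eigenvalues (τ m) * ‖x‖^2 := by
    calc c * hA.eigenvalues (σ m) * ‖x‖^2 = c * (hA.eigenvalues (σ m) * ‖x‖^2) := by ring
    _ ≤ c * RCLike.re (star (x : Fin n → ℂ) ⬝ᵥ (A *ᵥ x)) := mul_le_mul_of_nonneg_left hge hc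
    _ ≤ RCLike.re (star (x : Fin n → ℂ) ⬝ᵥ (B *ᵥ x)) := h x
    _ ≤ hB.eigenvalues (τ m) * ‖x‖^2 := hle
  have := le_of_mul_le_mul_right chain hxpos
  simpa [nthLargest, hσ, hτ, hm] using this


/-- for Hermitian PSD `M` and any `Ψ`, the `j`-th largest eigenvalue of
`Ψ·M·Ψᴴ` is at least `λ_min(M)` times the `j`-th largest eigenvalue of `Ψ·Ψᴴ`. -/
theorem stmt5 (R k : ℕ) (hR : 0 < R) (hk : 0 < k)
    (M : Matrix (Fin k) (Fin k) ℂ) (hM : M.PosSemidef)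
    (Ψ : Matrix (Fin R) (Fin k) ℂ) :
    ∀ j : Fin R,
      (Finset.univ.inf' (Finset.univ_nonempty_iff.mpr ⟨⟨0, hk⟩⟩) hM.1.eigenvalues) *
          nthLargest ((Matrix.isHermitian_mul_conjTranspose_self Ψ).eigenvalues) j ≤
        nthLargest
          ((Matrix.isHermitian_mul_mul_conjTranspose Ψ hM.1).eigenvalues) j := by
  intro j
  set c := Finset.univ.inf' (Finset.univ_nonempty_iff.mpr ⟨⟨0, hk⟩⟩) hM.1.eigenvalues with hcdef
  have hc : 0 ≤ c := by
    apply Finset.le_inf'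
    intro b _
    exact hM.eigenvalues_nonneg b
  apply nthLargest_mono_aux (Ψ * Ψᴴ) (Ψ * M * Ψᴴ) _ _ c hc
  intro x
  set y : Fin k → ℂ := Ψᴴ *ᵥ x with hy
  set yE : EuclideanSpace ℂ (Fin k) := (WithLp.equiv 2 _).symm y with hyE
  have eq1 : star x ⬝ᵥ ((Ψ * M * Ψᴴ) *ᵥ x) = star y ⬝ᵥ (M *ᵥ y) := by
    rw [← Matrix.mulVec_mulVec, ← Matrix.mulVec_mulVec, Matrix.dotProduct_mulVec (star x) Ψ,
      hy, Matrix.star_mulVec, Matrix.conjTranspose_conjTranspose]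
  have eq2 : star x ⬝ᵥ ((Ψ * Ψᴴ) *ᵥ x) = star y ⬝ᵥ y := by
    rw [← Matrix.mulVec_mulVec, Matrix.dotProduct_mulVec (star x) Ψ,
      hy, Matrix.star_mulVec, Matrix.conjTranspose_conjTranspose]
  rw [eq1, eq2]
  have hnorm : RCLike.re (star y ⬝ᵥ y) = ‖yE‖^2 := by
    rw [show star y ⬝ᵥ y = (⟪yE, yE⟫_ℂ) by rw [dotProduct_comm]; rfl]
    exact inner_self_eq_norm_sq (𝕜 := ℂ) yE
  rw [hnorm]
  have key : c * ‖yE‖^2 ≤ RCLike.re (star (yE : Fin k → ℂ) ⬝ᵥ (M *ᵥ yE)) := by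
    apply rayleigh_ge M hM.1 Finset.univ c _ yE
    · rw [Finset.coe_univ, Set.image_univ]
      have : Submodule.span ℂ (Set.range hM.1.eigenvectorBasis) = ⊤ := by
        have h1 := hM.1.eigenvectorBasis.toBasis.span_eq
        rwa [hM.1.eigenvectorBasis.coe_toBasis] at h1
      rw [this]; trivial
    · intro i _
      exact Finset.inf'_le _ (Finset.mem_univ i)
  exact key
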